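/- Let f ∈ L²(ℝ; ℂ) be compactly supported and not almost everywhere zero. Then there exists k ≥ 0 such that for every j < k the function Tʲf is integrable with ∫_ℝ Tʲf(x) dx = 0, while Tᵏf is integrable and ∫_ℝ Tᵏf(x) dx ≠ 0. -/

import Mathlib

open MeasureTheory

/-- The antiderivative operator `Tf(x) = ∫_{-∞}^x f(t) dt`. -/
noncomputable def T (f : ℝ → ℂ) : ℝ → ℂ := fun x => ∫ t in Set.Iic x, f t

/-- A function vanishes almost everywhere outside some compact set. -/
def AECompactlySupported (f : ℝ → ℂ) : Prop :=
  ∃ K : Set ℝ, IsCompact K ∧ ∀ᵐ x ∂(volume), x ∉ K → f x = 0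

lemma T_continuous {g : ℝ → ℂ} (hg : Integrable g) : Continuous (T g) := by
  have h : ∀ x, T g x = (∫ t in Set.Iic (0:ℝ), g t) + ∫ t in (0:ℝ)..x, g t := by
    intro x
    rw [← intervalIntegral.integral_Iic_sub_Iic hg.integrableOn hg.integrableOn]
    show (∫ t in Set.Iic x, g t) = _
    ring
  simp only [funext h]
  exact continuous_const.add
    (intervalIntegral.continuous_primitive (fun a b => hg.intervalIntegrable) 0)

lemma ae_ne (a : ℝ) : ∀ᵐ t : ℝ ∂volume, t ≠ a := by
  have : volume ({a} : Set ℝ) = 0 := measure_singleton a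
  filter_upwards [measure_eq_zero_iff_ae_notMem.mp this] with t ht
  simpa using ht

lemma T_eq_zero_outside {g : ℝ → ℂ} (hg : Integrable g) {a b : ℝ}
    (hsupp : ∀ᵐ t ∂volume, t ∉ Set.Icc a b → g t = 0) (h0 : ∫ t, g t = 0) :
    ∀ x, x ∉ Set.Ioc a b → T g x = 0 := by
  intro x hx
  rcases not_and_or.mp hx with hxa | hxb
  · push_neg at hxa
    -- x ≤ a
    have : ∀ᵐ t ∂(volume.restrict (Set.Iic x)), g t = 0 := by
      filter_upwards [ae_restrict_of_ae hsupp, ae_restrict_of_ae (ae_ne a),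
        ae_restrict_mem measurableSet_Iic] with t h1 h2 h3
      apply h1
      intro hmem
      exact h2 (le_antisymm (le_trans h3 hxa) hmem.1)
    exact integral_eq_zero_of_ae this
  · push_neg at hxb
    -- b ≤ x... hxb : ¬ x ≤ b is wrong direction; hx : ¬(a < x ∧ x ≤ b)
    have hT : T g x = ∫ t, g t := by
      apply setIntegral_eq_integral_of_ae_compl_eq_zero
      filter_upwards [hsupp] with t h1 h2
      apply h1
      intro hmem
      simp only [Set.mem_compl_iff, Set.mem_Iic, not_le] at h2
      exact absurd hmem.2 (not_le.mpr (hxb.trans h2))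
    rw [hT, h0]

lemma T_integrable {g : ℝ → ℂ} (hg : Integrable g) {a b : ℝ}
    (hsupp : ∀ᵐ t ∂volume, t ∉ Set.Icc a b → g t = 0) (h0 : ∫ t, g t = 0) :
    Integrable (T g) := by
  apply (T_continuous hg).integrable_of_hasCompactSupport
  apply HasCompactSupport.intro (isCompact_Icc (a := a) (b := b))
  intro x hx
  apply T_eq_zero_outside hg hsupp h0
  intro hmem
  exact hx ⟨le_of_lt hmem.1, hmem.2⟩

lemma T_ae_supp {g : ℝ → ℂ} (hg : Integrable g) {a b : ℝ}
    (hsupp : ∀ᵐ t ∂volume, t ∉ Set.Icc a b → g t = 0) (h0 : ∫ t, g t = 0) :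
    ∀ᵐ t ∂volume, t ∉ Set.Icc a b → T g t = 0 := by
  apply Filter.Eventually.of_forall
  intro x hx
  apply T_eq_zero_outside hg hsupp h0
  intro hmem
  exact hx ⟨le_of_lt hmem.1, hmem.2⟩

lemma integrable_cont_mul {g : ℝ → ℂ} (hg : Integrable g) {a b : ℝ}
    (hsupp : ∀ᵐ t ∂volume, t ∉ Set.Icc a b → g t = 0) (φ : ℝ → ℂ) (hφ : Continuous φ) :
    Integrable (fun x => φ x * g x) := by
  obtain ⟨C, hC⟩ := isCompact_Icc.exists_bound_of_continuousOn hφ.continuousOn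
  have : Integrable (fun x => (Set.Icc a b).indicator φ x * g x) := by
    apply hg.bdd_mul (c := max C 0) (hφ.aestronglyMeasurable.indicator measurableSet_Icc)
    refine Filter.Eventually.of_forall fun x => ?_
    by_cases hx : x ∈ Set.Icc a b
    · simp only [Set.indicator_of_mem hx]
      exact le_max_of_le_left (hC x hx)
    · simp [Set.indicator_of_notMem hx]
  apply this.congr
  filter_upwards [hsupp] with x hx
  by_cases h : x ∈ Set.Icc a b
  · simp [Set.indicator_of_mem h]
  · simp [Set.indicator_of_notMem h, hx h]

lemma integrable_pow_mul {g : ℝ → ℂ} (hg : Integrable g) {a b : ℝ}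
    (hsupp : ∀ᵐ t ∂volume, t ∉ Set.Icc a b → g t = 0) (n : ℕ) :
    Integrable (fun x : ℝ => (x:ℂ)^n * g x) :=
  integrable_cont_mul hg hsupp _ ((Complex.continuous_ofReal).pow n)

lemma ae_supp_Ioc {g : ℝ → ℂ} {a b : ℝ}
    (hsupp : ∀ᵐ t ∂volume, t ∉ Set.Icc a b → g t = 0) :
    ∀ᵐ t ∂volume, t ∉ Set.Ioc a b → g t = 0 := by
  filter_upwards [hsupp, ae_ne a] with t h1 h2 h3
  apply h1
  intro hmem
  exact h3 ⟨lt_of_le_of_ne hmem.1 (Ne.symm h2), hmem.2⟩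

lemma setIntegral_Ioc_eq_integral {g : ℝ → ℂ} {a b : ℝ}
    (hsupp : ∀ᵐ t ∂volume, t ∉ Set.Icc a b → g t = 0) :
    ∫ t in Set.Ioc a b, g t = ∫ t, g t :=
  setIntegral_eq_integral_of_ae_compl_eq_zero (ae_supp_Ioc hsupp)

lemma parts {g : ℝ → ℂ} (hg : Integrable g) {a b : ℝ} (hab : a ≤ b)
    (hsupp : ∀ᵐ t ∂volume, t ∉ Set.Icc a b → g t = 0) (h0 : ∫ t, g t = 0) (n : ℕ) :
    ∫ x : ℝ, (x:ℂ)^n * T g x = -(((n:ℂ)+1)⁻¹) * ∫ t : ℝ, (t:ℂ)^(n+1) * g t := by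
  have hTout := T_eq_zero_outside hg hsupp h0
  set M : ℝ := max |a| |b| with hM
  -- restrict to Ioc a b
  have step1 : ∫ x : ℝ, (x:ℂ)^n * T g x = ∫ x in Set.Ioc a b, (x:ℂ)^n * T g x := by
    refine (setIntegral_eq_integral_of_ae_compl_eq_zero ?_).symm
    apply Filter.Eventually.of_forall
    intro x hx
    rw [hTout x hx, mul_zero]
  -- T g as a tail integral
  have step2 : ∀ x ∈ Set.Ioc a b, T g x = -∫ t in Set.Ioc x b, g t := by
    intro x hx
    have hIb : ∫ t in Set.Iic b, g t = 0 := by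
      rw [setIntegral_eq_integral_of_ae_compl_eq_zero, h0]
      filter_upwards [hsupp] with t h1 h2
      apply h1
      intro hmem
      simp only [Set.mem_compl_iff, Set.mem_Iic, not_le] at h2
      exact absurd hmem.2 (not_le.mpr h2)
    have hsplit : (∫ t in Set.Iic x, g t) + ∫ t in Set.Ioc x b, g t
        = ∫ t in Set.Iic b, g t := by
      rw [← setIntegral_union (Set.Iic_disjoint_Ioc le_rfl) measurableSet_Ioc
        hg.integrableOn hg.integrableOn, Set.Iic_union_Ioc_eq_Iic hx.2]
    have : (T g x) + ∫ t in Set.Ioc x b, g t = 0 := by rw [← hIb]; exact hsplit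
    exact eq_neg_of_add_eq_zero_left this
  -- rewrite inner integral with an indicator over the fixed box
  have step4 : ∀ x ∈ Set.Ioc a b,
      ∫ t in Set.Ioc x b, g t = ∫ t in Set.Ioc a b, (Set.Ioi x).indicator g t := by
    intro x hx
    rw [setIntegral_indicator measurableSet_Ioi]
    have hseteq : Set.Ioc a b ∩ Set.Ioi x = Set.Ioc x b := by
      ext t
      simp only [Set.mem_inter_iff, Set.mem_Ioc, Set.mem_Ioi]
      exact ⟨fun ⟨⟨h1, h2⟩, h3⟩ => ⟨h3, h2⟩, fun ⟨h1, h2⟩ => ⟨⟨hx.1.trans h1, h2⟩, h1⟩⟩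
    rw [hseteq]
  have step3 : ∫ x in Set.Ioc a b, (x:ℂ)^n * T g x
      = -∫ x in Set.Ioc a b, ∫ t in Set.Ioc a b, (x:ℂ)^n * (Set.Ioi x).indicator g t := by
    rw [← integral_neg]
    apply setIntegral_congr_fun measurableSet_Ioc
    intro x hx
    simp only
    rw [step2 x hx, step4 x hx, mul_neg, MeasureTheory.integral_const_mul]
  haveI hfin : IsFiniteMeasure (volume.restrict (Set.Ioc a b)) :=
    ⟨by rw [Measure.restrict_apply_univ]; exact measure_Ioc_lt_top⟩
  -- product integrability
  have hmeas : AEStronglyMeasurable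
      (Function.uncurry fun (x t : ℝ) => (x:ℂ)^n * (Set.Ioi x).indicator g t)
      ((volume.restrict (Set.Ioc a b)).prod (volume.restrict (Set.Ioc a b))) := by
    have h1 : AEStronglyMeasurable (fun p : ℝ × ℝ => ((p.1:ℂ))^n)
        ((volume.restrict (Set.Ioc a b)).prod (volume.restrict (Set.Ioc a b))) :=
      ((Complex.continuous_ofReal.comp continuous_fst).pow n).aestronglyMeasurable
    have h2 : AEStronglyMeasurable (fun p : ℝ × ℝ => g p.2)
        ((volume.restrict (Set.Ioc a b)).prod (volume.restrict (Set.Ioc a b))) :=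
      (hg.aestronglyMeasurable.restrict).comp_snd
    have h3 : MeasurableSet {p : ℝ × ℝ | p.1 < p.2} :=
      measurableSet_lt measurable_fst measurable_snd
    have heq : (Function.uncurry fun (x t : ℝ) => (x:ℂ)^n * (Set.Ioi x).indicator g t)
        = fun p : ℝ × ℝ => (p.1:ℂ)^n * ({q : ℝ × ℝ | q.1 < q.2}.indicator (fun q => g q.2) p) := by
      ext p
      simp only [Function.uncurry]
      by_cases h : p.1 < p.2
      · rw [Set.indicator_of_mem (Set.mem_Ioi.mpr h),
          Set.indicator_of_mem (by exact h : p ∈ {q : ℝ × ℝ | q.1 < q.2})]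
      · rw [Set.indicator_of_notMem (by simpa using h),
          Set.indicator_of_notMem (by exact h : p ∉ {q : ℝ × ℝ | q.1 < q.2})]
    rw [heq]
    exact h1.mul (h2.indicator h3)
  have hbound : Integrable (fun p : ℝ × ℝ => M^n * ‖g p.2‖)
      ((volume.restrict (Set.Ioc a b)).prod (volume.restrict (Set.Ioc a b))) :=
    (integrable_const (M^n)).mul_prod hg.norm.restrict
  have hF : Integrable (Function.uncurry fun (x t : ℝ) => (x:ℂ)^n * (Set.Ioi x).indicator g t)
      ((volume.restrict (Set.Ioc a b)).prod (volume.restrict (Set.Ioc a b))) := by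
    apply hbound.mono' hmeas
    rw [Measure.prod_restrict]
    filter_upwards [ae_restrict_mem (measurableSet_Ioc.prod measurableSet_Ioc)] with p hp
    have hp1 : p.1 ∈ Set.Ioc a b := hp.1
    have habs : |p.1| ≤ M := abs_le_max_abs_abs hp1.1.le hp1.2
    simp only [Function.uncurry, norm_mul, norm_pow, Complex.norm_real]
    apply mul_le_mul _ (norm_indicator_le_norm_self _ _) (norm_nonneg _)
      (pow_nonneg (le_trans (abs_nonneg _) habs) n)
    exact pow_le_pow_left₀ (abs_nonneg _) habs n
  have hswap := MeasureTheory.integral_integral_swap hF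
  -- compute the inner integral after swapping
  have step8 : ∀ t ∈ Set.Ioc a b,
      (∫ x in Set.Ioc a b, (x:ℂ)^n * (Set.Ioi x).indicator g t)
        = (((t^(n+1) - a^(n+1))/(n+1) : ℝ) : ℂ) * g t := by
    intro t ht
    have h1 : ∀ x : ℝ, (x:ℂ)^n * (Set.Ioi x).indicator g t
        = (Set.Iio t).indicator (fun x : ℝ => (x:ℂ)^n * g t) x := by
      intro x
      by_cases h : x < t
      · rw [Set.indicator_of_mem (Set.mem_Ioi.mpr h), Set.indicator_of_mem (Set.mem_Iio.mpr h)]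
      · rw [Set.indicator_of_notMem (by simpa using h),
          Set.indicator_of_notMem (by simpa using h), mul_zero]
    simp_rw [h1]
    rw [setIntegral_indicator measurableSet_Iio]
    have hseteq : Set.Ioc a b ∩ Set.Iio t = Set.Ioo a t := by
      ext x
      simp only [Set.mem_inter_iff, Set.mem_Ioc, Set.mem_Iio, Set.mem_Ioo]
      exact ⟨fun ⟨⟨u, v⟩, w⟩ => ⟨u, w⟩, fun ⟨u, w⟩ => ⟨⟨u, (le_of_lt w).trans ht.2⟩, w⟩⟩
    have hpow : ∫ x in Set.Ioo a t, (x:ℂ)^n = (((t^(n+1) - a^(n+1))/(n+1) : ℝ):ℂ) := by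
      rw [← MeasureTheory.integral_Ioc_eq_integral_Ioo,
        ← intervalIntegral.integral_of_le ht.1.le]
      have hc : ∀ x : ℝ, (x:ℂ)^n = ((x^n : ℝ) : ℂ) := by intro x; push_cast; ring
      simp_rw [hc]
      rw [intervalIntegral.integral_ofReal, integral_pow]
    rw [hseteq, MeasureTheory.integral_mul_const, hpow]
  -- assemble
  have hsupp2 : ∀ᵐ t ∂volume, t ∉ Set.Icc a b → (t:ℂ)^(n+1) * g t = 0 := by
    filter_upwards [hsupp] with t h1 h2
    rw [h1 h2, mul_zero]
  have hne : ((n:ℂ)+1) ≠ 0 := Nat.cast_add_one_ne_zero n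
  have h5 : ∫ t in Set.Ioc a b, (((t^(n+1) - a^(n+1))/(n+1) : ℝ):ℂ) * g t
      = ((n:ℂ)+1)⁻¹ * ∫ t : ℝ, (t:ℂ)^(n+1) * g t := by
    have hint1 : Integrable (fun t : ℝ => (t:ℂ)^(n+1) * g t) := integrable_pow_mul hg hsupp (n+1)
    have hptw : ∀ t : ℝ, (((t^(n+1) - a^(n+1))/(n+1) : ℝ):ℂ) * g t
        = ((n:ℂ)+1)⁻¹ * ((t:ℂ)^(n+1) * g t) - (((a:ℂ)^(n+1)) * ((n:ℂ)+1)⁻¹) * g t := by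
      intro t
      push_cast
      field_simp
    simp_rw [hptw]
    rw [integral_sub (hint1.restrict.const_mul _) (hg.restrict.const_mul _),
      MeasureTheory.integral_const_mul, MeasureTheory.integral_const_mul,
      setIntegral_Ioc_eq_integral hsupp2, setIntegral_Ioc_eq_integral hsupp, h0,
      mul_zero, sub_zero]
  calc ∫ x : ℝ, (x:ℂ)^n * T g x
      = -∫ x in Set.Ioc a b, ∫ t in Set.Ioc a b, (x:ℂ)^n * (Set.Ioi x).indicator g t := by
        rw [step1, step3]
    _ = -∫ t in Set.Ioc a b, ∫ x in Set.Ioc a b, (x:ℂ)^n * (Set.Ioi x).indicator g t := by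
        rw [hswap]
    _ = -∫ t in Set.Ioc a b, (((t^(n+1) - a^(n+1))/(n+1) : ℝ):ℂ) * g t := by
        congr 1
        exact setIntegral_congr_fun measurableSet_Ioc step8
    _ = -(((n:ℂ)+1)⁻¹) * ∫ t : ℝ, (t:ℂ)^(n+1) * g t := by
        rw [h5]; ring

lemma moments_vanish : ∀ (n : ℕ) (g : ℝ → ℂ) (a b : ℝ), a ≤ b → Integrable g →
    (∀ᵐ t ∂volume, t ∉ Set.Icc a b → g t = 0) →
    (∀ j, Integrable (T^[j] g) ∧ ∫ x, T^[j] g x = 0) →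
    ∫ t : ℝ, (t:ℂ)^n * g t = 0 := by
  intro n
  induction n with
  | zero =>
    intro g a b hab hg hsupp hall
    simpa using (hall 0).2
  | succ n ih =>
    intro g a b hab hg hsupp hall
    have h0 : ∫ t, g t = 0 := by simpa using (hall 0).2
    have hTint : Integrable (T g) := T_integrable hg hsupp h0
    have hTsupp : ∀ᵐ t ∂volume, t ∉ Set.Icc a b → T g t = 0 := T_ae_supp hg hsupp h0
    have hTall : ∀ j, Integrable (T^[j] (T g)) ∧ ∫ x, T^[j] (T g) x = 0 := by
      intro j
      have := hall (j + 1)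
      rwa [Function.iterate_succ_apply] at this
    have hIH : ∫ x : ℝ, (x:ℂ)^n * T g x = 0 := ih (T g) a b hab hTint hTsupp hTall
    have hparts := parts hg hab hsupp h0 n
    rw [hIH] at hparts
    have hne : ((n:ℂ)+1) ≠ 0 := Nat.cast_add_one_ne_zero n
    have := hparts.symm
    rw [neg_mul, neg_eq_zero, mul_eq_zero] at this
    rcases this with h | h
    · exact absurd h (inv_ne_zero hne)
    · exact h

lemma ae_zero_of_moments {g : ℝ → ℂ} (hg : Integrable g) {a b : ℝ} (hab : a ≤ b)
    (hsupp : ∀ᵐ t ∂volume, t ∉ Set.Icc a b → g t = 0)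
    (hm : ∀ n : ℕ, ∫ t : ℝ, (t:ℂ)^n * g t = 0) : g =ᵐ[volume] 0 := by
  apply ae_eq_zero_of_integral_contDiff_smul_eq_zero hg.locallyIntegrable
  intro φ hφ hφc
  -- ∫ φ • g = 0 via Weierstrass approximation
  have hpoly : ∀ p : Polynomial ℝ, ∫ x : ℝ, ((p.eval x : ℝ) : ℂ) * g x = 0 := by
    intro p
    have heval : ∀ x : ℝ, ((p.eval x : ℝ) : ℂ)
        = ∑ i ∈ Finset.range (p.natDegree + 1), ((p.coeff i : ℝ) : ℂ) * (x:ℂ)^i := by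
      intro x
      rw [Polynomial.eval_eq_sum_range]
      push_cast
      rfl
    have hint : ∀ i : ℕ, Integrable (fun x : ℝ => ((p.coeff i : ℝ):ℂ) * ((x:ℂ)^i * g x)) :=
      fun i => (integrable_pow_mul hg hsupp i).const_mul _
    calc ∫ x : ℝ, ((p.eval x : ℝ) : ℂ) * g x
        = ∫ x : ℝ, ∑ i ∈ Finset.range (p.natDegree + 1),
            ((p.coeff i : ℝ):ℂ) * ((x:ℂ)^i * g x) := by
          congr 1
          ext x
          rw [heval, Finset.sum_mul]
          congr 1
          ext i
          ring
      _ = ∑ i ∈ Finset.range (p.natDegree + 1), ∫ x : ℝ, ((p.coeff i : ℝ):ℂ) * ((x:ℂ)^i * g x) :=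
          integral_finset_sum _ (fun i _ => hint i)
      _ = 0 := by
          apply Finset.sum_eq_zero
          intro i _
          rw [MeasureTheory.integral_const_mul, hm i, mul_zero]
  set v : ℂ := ∫ x : ℝ, φ x • g x with hv
  have hφint : Integrable (fun x : ℝ => φ x • g x) := by
    have : Integrable (fun x : ℝ => ((φ x : ℝ) : ℂ) * g x) :=
      integrable_cont_mul hg hsupp _ (Complex.continuous_ofReal.comp hφ.continuous)
    apply this.congr
    apply Filter.Eventually.of_forall
    intro x
    simp only [Complex.real_smul]
  have hC : (0:ℝ) ≤ ∫ x, ‖g x‖ := integral_nonneg fun x => norm_nonneg _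
  have key : ∀ ε : ℝ, 0 < ε → ‖v‖ ≤ ε * ∫ x, ‖g x‖ := by
    intro ε hε
    obtain ⟨p, hp⟩ := exists_polynomial_near_of_continuousOn a b φ hφ.continuous.continuousOn ε hε
    have hpint : Integrable (fun x : ℝ => ((p.eval x : ℝ):ℂ) * g x) :=
      integrable_cont_mul hg hsupp _
        (Complex.continuous_ofReal.comp (p.continuous_aeval))
    have hveq : v = ∫ x : ℝ, (φ x • g x - ((p.eval x : ℝ):ℂ) * g x) := by
      rw [integral_sub hφint hpint, hpoly p, sub_zero]
    rw [hveq]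
    refine le_trans (norm_integral_le_integral_norm _) ?_
    have : ∫ x : ℝ, ‖φ x • g x - ((p.eval x : ℝ):ℂ) * g x‖ ≤ ∫ x : ℝ, ε * ‖g x‖ := by
      apply integral_mono_of_nonneg
      · exact Filter.Eventually.of_forall fun x => norm_nonneg _
      · exact hg.norm.const_mul ε
      · filter_upwards [hsupp] with x hx
        have hfac : φ x • g x - ((p.eval x : ℝ):ℂ) * g x = (((φ x - p.eval x : ℝ)):ℂ) * g x := by
          rw [Complex.real_smul]
          push_cast
          ring
        rw [hfac]
        by_cases h : x ∈ Set.Icc a b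
        · rw [norm_mul, Complex.norm_real]
          apply mul_le_mul_of_nonneg_right _ (norm_nonneg _)
          rw [Real.norm_eq_abs, abs_sub_comm]
          exact (hp x h).le
        · rw [hx h]
          simp [mul_nonneg hε.le (norm_nonneg _)]
    refine le_trans this ?_
    rw [MeasureTheory.integral_const_mul]
  have hv0 : ‖v‖ ≤ 0 := by
    by_contra hcon
    push_neg at hcon
    set C := ∫ x, ‖g x‖
    have hε : 0 < ‖v‖ / (2 * (C + 1)) := by positivity
    have := key _ hε
    have hlt : ‖v‖ / (2 * (C + 1)) * C < ‖v‖ := by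
      rw [div_mul_eq_mul_div, div_lt_iff₀ (by positivity)]
      nlinarith
    linarith
  have : v = 0 := norm_le_zero_iff.mp hv0
  exact this

/-- If `f ∈ L²(ℝ)` is compactly supported and not a.e. zero, then there is a `k ≥ 0`
such that `Tʲf` is integrable with zero integral for all `j < k`, while `Tᵏf` is
integrable with nonzero integral. -/
theorem exists_iterate_integral_ne_zero
    (f : ℝ → ℂ) (hf : MemLp f 2 volume)
    (hfc : AECompactlySupported f) (hf0 : ¬ f =ᵐ[volume] 0) :
    ∃ k : ℕ, (∀ j < k, Integrable (T^[j] f) ∧ ∫ x, T^[j] f x = 0) ∧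
      Integrable (T^[k] f) ∧ ∫ x, T^[k] f x ≠ 0 := by
  classical
  obtain ⟨K, hK, hKae⟩ := hfc
  obtain ⟨R, hR⟩ := hK.isBounded.subset_closedBall 0
  set a : ℝ := -|R| with ha
  set b : ℝ := |R| with hb
  have hab : a ≤ b := neg_abs_le R |>.trans (le_abs_self R)
  have hKsub : K ⊆ Set.Icc a b := by
    intro x hx
    have := hR hx
    rw [Metric.mem_closedBall, Real.dist_eq, sub_zero] at this
    have habs : |x| ≤ |R| := this.trans (le_abs_self R)
    exact ⟨neg_le_of_abs_le habs, le_of_abs_le habs⟩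
  have hsupp : ∀ᵐ t ∂volume, t ∉ Set.Icc a b → f t = 0 := by
    filter_upwards [hKae] with t h1 h2
    exact h1 fun hk => h2 (hKsub hk)
  have hint : Integrable f := by
    haveI : IsFiniteMeasure (volume.restrict (Set.Icc a b)) :=
      ⟨by rw [Measure.restrict_apply_univ]; exact measure_Icc_lt_top⟩
    have h2 : MemLp f 2 (volume.restrict (Set.Icc a b)) := hf.restrict _
    have h1 : MemLp f 1 (volume.restrict (Set.Icc a b)) :=
      h2.mono_exponent (by norm_num)
    have hIO : IntegrableOn f (Set.Icc a b) volume := memLp_one_iff_integrable.mp h1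
    have hind : Integrable ((Set.Icc a b).indicator f) :=
      hIO.integrable_indicator measurableSet_Icc
    apply hind.congr
    filter_upwards [hsupp] with x hx
    by_cases h : x ∈ Set.Icc a b
    · simp [Set.indicator_of_mem h]
    · simp [Set.indicator_of_notMem h, hx h]
  have chain : ∀ j, (∀ i < j, Integrable (T^[i] f) ∧ ∫ x, T^[i] f x = 0) →
      Integrable (T^[j] f) ∧ ∀ᵐ t ∂volume, t ∉ Set.Icc a b → T^[j] f t = 0 := by
    intro j
    induction j with
    | zero => intro _; exact ⟨by simpa using hint, by simpa using hsupp⟩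
    | succ j ihj =>
      intro h
      obtain ⟨hI, hS⟩ := ihj fun i hi => h i (hi.trans (Nat.lt_succ_self j))
      have h0j : ∫ x, T^[j] f x = 0 := (h j (Nat.lt_succ_self j)).2
      rw [Function.iterate_succ_apply']
      exact ⟨T_integrable hI hS h0j, T_ae_supp hI hS h0j⟩
  have hex : ∃ j, ¬ (Integrable (T^[j] f) ∧ ∫ x, T^[j] f x = 0) := by
    by_contra h
    rw [not_exists] at h
    have hall : ∀ j, Integrable (T^[j] f) ∧ ∫ x, T^[j] f x = 0 := by
      intro j
      have := h j
      rwa [not_not] at this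
    exact hf0 (ae_zero_of_moments hint hab hsupp
      (fun n => moments_vanish n f a b hab hint hsupp hall))
  refine ⟨Nat.find hex, fun j hj => not_not.mp (Nat.find_min hex hj), ?_, ?_⟩
  · exact (chain (Nat.find hex) fun i hi => not_not.mp (Nat.find_min hex hi)).1
  · intro h
    exact Nat.find_spec hex
      ⟨(chain (Nat.find hex) fun i hi => not_not.mp (Nat.find_min hex hi)).1, h⟩
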